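/- arXiv:2310.14115 — 3 statements merged into one kernel-verified Lean document; each statement's English description precedes it below -/
import Mathlib

section
/- For all complex numbers a₀, a₁ with a₀ ≠ 0 and a₁ ≠ 0, the quaternion σ₀(a₀, a₁)·σ₁(a₀, a₁)⁻¹ equals the unit complex number (a₁/a₀)/|a₁/a₀| (regarded as a quaternion); in particular it lies in the unit circle of ℂ ⊂ ℍ. -/
open Quaternion

noncomputable section

/-- The embedding of `ℂ` into the quaternions `ℍ` as the real span of `1` and `i`. -/
def cq (z : ℂ) : ℍ[ℝ] := ⟨z.re, z.im, 0, 0⟩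

/-- The imaginary unit `j` of the quaternions. -/
def jq : ℍ[ℝ] := ⟨0, 0, 1, 0⟩

/-- `σ₀(a₀,a₁) = (1 + (a₁/a₀)·j)/‖1 + (a₁/a₀)·j‖`, defined for `a₀ ≠ 0`. -/
def sigma0 (a₀ a₁ : ℂ) : ℍ[ℝ] := ‖cq 1 + cq (a₁ / a₀) * jq‖⁻¹ • (cq 1 + cq (a₁ / a₀) * jq)

/-- `σ₁(a₀,a₁) = (a₀/a₁ + j)/‖a₀/a₁ + j‖`, defined for `a₁ ≠ 0`. -/
def sigma1 (a₀ a₁ : ℂ) : ℍ[ℝ] := ‖cq (a₀ / a₁) + jq‖⁻¹ • (cq (a₀ / a₁) + jq)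

lemma norm_eq_sqrt_normSq (q : ℍ[ℝ]) : ‖q‖ = Real.sqrt (Quaternion.normSq q) := by
  rw [Quaternion.normSq_eq_norm_mul_self, Real.sqrt_mul_self (norm_nonneg q)]

lemma norm_cq (z : ℂ) : ‖cq z‖ = ‖z‖ := by
  rw [norm_eq_sqrt_normSq, Quaternion.normSq_def', Complex.norm_def, Complex.normSq_apply]
  simp [cq]
  ring_nf

set_option maxHeartbeats 1000000 in
/-- `σ₀(a₀,a₁)·σ₁(a₀,a₁)⁻¹` equals the unit complex number `(a₁/a₀)/|a₁/a₀|` regarded as a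
quaternion; in particular it lies in the unit circle of `ℂ ⊂ ℍ`. -/
theorem sigma0_mul_sigma1_inv (a₀ a₁ : ℂ) (h₀ : a₀ ≠ 0) (h₁ : a₁ ≠ 0) :
    sigma0 a₀ a₁ * (sigma1 a₀ a₁)⁻¹ = cq ((a₁ / a₀) / (‖a₁ / a₀‖ : ℂ)) ∧
    (sigma0 a₀ a₁ * (sigma1 a₀ a₁)⁻¹).imJ = 0 ∧
    (sigma0 a₀ a₁ * (sigma1 a₀ a₁)⁻¹).imK = 0 ∧
    ‖sigma0 a₀ a₁ * (sigma1 a₀ a₁)⁻¹‖ = 1 := by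
  have hr : a₁ / a₀ ≠ 0 := div_ne_zero h₁ h₀
  set x := (a₁ / a₀).re with hx
  set y := (a₁ / a₀).im with hy
  have hn : 0 < x ^ 2 + y ^ 2 := by
    have := Complex.normSq_pos.2 hr
    rwa [Complex.normSq_apply, ← hx, ← hy, ← sq, ← sq] at this
  have hn' : x ^ 2 + y ^ 2 ≠ 0 := ne_of_gt hn
  have hA : (0:ℝ) < 1 + (x ^ 2 + y ^ 2) := by linarith
  have hw : a₀ / a₁ = (a₁ / a₀)⁻¹ := (inv_div a₁ a₀).symm
  have hwre : (a₀ / a₁).re = x / (x ^ 2 + y ^ 2) := by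
    rw [hw, Complex.inv_re, Complex.normSq_apply, ← hx, ← hy, sq, sq]
  have hwim : (a₀ / a₁).im = -y / (x ^ 2 + y ^ 2) := by
    rw [hw, Complex.inv_im, Complex.normSq_apply, ← hx, ← hy, sq, sq, neg_div]
  -- norms
  have hsn : Real.sqrt (x ^ 2 + y ^ 2) ≠ 0 := Real.sqrt_ne_zero'.2 hn
  have hsA : Real.sqrt (1 + (x ^ 2 + y ^ 2)) ≠ 0 := Real.sqrt_ne_zero'.2 hA
  have hsA2 : Real.sqrt (1 + (x ^ 2 + y ^ 2)) ^ 2 = 1 + (x ^ 2 + y ^ 2) :=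
    Real.sq_sqrt hA.le
  have hsn2 : Real.sqrt (x ^ 2 + y ^ 2) ^ 2 = x ^ 2 + y ^ 2 := Real.sq_sqrt hn.le
  have habs : ‖a₁ / a₀‖ = Real.sqrt (x ^ 2 + y ^ 2) := by
    rw [Complex.norm_def, Complex.normSq_apply, ← hx, ← hy, sq, sq]
  have hv0 : ‖cq 1 + cq (a₁ / a₀) * jq‖ = Real.sqrt (1 + (x ^ 2 + y ^ 2)) := by
    rw [norm_eq_sqrt_normSq]
    congr 1
    rw [Quaternion.normSq_def']
    simp only [Quaternion.re_add, Quaternion.imI_add, Quaternion.imJ_add,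
      Quaternion.imK_add, Quaternion.re_mul, Quaternion.imI_mul, Quaternion.imJ_mul,
      Quaternion.imK_mul]
    simp [cq, jq, Quaternion.re_mul, Quaternion.imI_mul, Quaternion.imJ_mul,
      Quaternion.imK_mul, ← hx, ← hy]
    ring
  have hv1 : ‖cq (a₀ / a₁) + jq‖ =
      Real.sqrt (1 + (x ^ 2 + y ^ 2)) / Real.sqrt (x ^ 2 + y ^ 2) := by
    rw [norm_eq_sqrt_normSq, ← Real.sqrt_div hA.le]
    congr 1
    rw [Quaternion.normSq_def']
    simp only [Quaternion.re_add, Quaternion.imI_add, Quaternion.imJ_add,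
      Quaternion.imK_add, Quaternion.re_mul, Quaternion.imI_mul, Quaternion.imJ_mul,
      Quaternion.imK_mul]
    simp [cq, jq, hwre, hwim, Quaternion.re_add, Quaternion.imI_add, Quaternion.imJ_add,
      Quaternion.imK_add]
    field_simp
  have hns1 : Quaternion.normSq (sigma1 a₀ a₁) = 1 := by
    rw [sigma1, Quaternion.normSq_smul, hv1]
    rw [Quaternion.normSq_def']
    simp only [Quaternion.re_add, Quaternion.imI_add, Quaternion.imJ_add,
      Quaternion.imK_add, Quaternion.re_mul, Quaternion.imI_mul, Quaternion.imJ_mul,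
      Quaternion.imK_mul]
    simp [cq, jq, hwre, hwim, Quaternion.re_add, Quaternion.imI_add, Quaternion.imJ_add,
      Quaternion.imK_add]
    field_simp
    rw [hsn2, hsA2]
  have hinv : (sigma1 a₀ a₁)⁻¹ = star (sigma1 a₀ a₁) := by
    rw [Quaternion.inv_def, hns1, inv_one, one_smul]
  clear_value x y
  set s := Real.sqrt (x ^ 2 + y ^ 2) with hs
  set t := Real.sqrt (1 + (x ^ 2 + y ^ 2)) with ht
  have hspos : 0 < s := lt_of_le_of_ne (Real.sqrt_nonneg _) (Ne.symm hsn)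
  have htpos : 0 < t := lt_of_le_of_ne (Real.sqrt_nonneg _) (Ne.symm hsA)
  have hs2 : s ^ 2 = x ^ 2 + y ^ 2 := hsn2
  have ht2 : t ^ 2 = 1 + (x ^ 2 + y ^ 2) := hsA2
  have hv0' : ‖cq 1 + cq (a₁ / a₀) * jq‖ = t := hv0
  have hv1' : ‖cq (a₀ / a₁) + jq‖ = t / s := hv1
  clear_value s t
  have key : sigma0 a₀ a₁ * (sigma1 a₀ a₁)⁻¹ =
      cq ((a₁ / a₀) / (‖a₁ / a₀‖ : ℂ)) := by
    rw [hinv, sigma0, sigma1, Quaternion.star_smul]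
    have hzre : ((a₁ / a₀) / (‖a₁ / a₀‖ : ℂ)).re =
        x / s := by
      rw [Complex.div_ofReal_re, habs, ← hx]
    have hzim : ((a₁ / a₀) / (‖a₁ / a₀‖ : ℂ)).im =
        y / s := by
      rw [Complex.div_ofReal_im, habs, ← hy]
    have hzq : cq ((a₁ / a₀) / (‖a₁ / a₀‖ : ℂ)) =
        (⟨x / s, y / s, 0, 0⟩ : ℍ[ℝ]) := by
      simp only [cq, hzre, hzim]
      rfl
    rw [smul_mul_smul_comm, hzq, hv0', hv1']
    ext <;>
      simp only [Quaternion.re_mul, Quaternion.imI_mul,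
        Quaternion.imJ_mul, Quaternion.imK_mul, Quaternion.re_smul, Quaternion.imI_smul,
        Quaternion.imJ_smul, Quaternion.imK_smul, Quaternion.re_add, Quaternion.imI_add,
        Quaternion.imJ_add, Quaternion.imK_add, Quaternion.re_star, Quaternion.imI_star,
        Quaternion.imJ_star, Quaternion.imK_star] <;>
      simp only [cq, jq, hwre, hwim, Quaternion.re_mul, Quaternion.imI_mul,
        Quaternion.imJ_mul, Quaternion.imK_mul, Quaternion.re_smul, Quaternion.imI_smul,
        Quaternion.imJ_smul, Quaternion.imK_smul, Quaternion.re_add, Quaternion.imI_add,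
        Quaternion.imJ_add, Quaternion.imK_add, Quaternion.re_star, Quaternion.imI_star,
        Quaternion.imJ_star, Quaternion.imK_star, Complex.one_re, Complex.one_im,
        smul_eq_mul, mul_zero, zero_mul, mul_one, one_mul, add_zero, zero_add, sub_zero,
        zero_sub, neg_zero, neg_neg, mul_neg, neg_mul, sub_neg_eq_add, ← hx, ← hy] <;>
      field_simp
    · linear_combination (x * (1 + (x ^ 2 + y ^ 2))) * hs2 - (x * (x ^ 2 + y ^ 2)) * ht2
    · linear_combination (y * (1 + (x ^ 2 + y ^ 2))) * hs2 - (y * (x ^ 2 + y ^ 2)) * ht2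
    · ring
    · ring
  refine ⟨key, ?_, ?_, ?_⟩
  · rw [key]; rfl
  · rw [key]; rfl
  · rw [key, norm_cq, norm_div, Complex.norm_real, Real.norm_of_nonneg (norm_nonneg _),
      div_self]
    exact norm_ne_zero_iff.mpr hr
end
end

section
/- Let h be a quaternion of norm 1 and let (a₀, a₁), (b₀, b₁) ∈ ℂ² ∖ {(0,0)}. Then the complex components of (b₀ + b₁·j)·h represent the point [a₀:a₁] of ℂP¹ if and only if there exists θ ∈ ℝ such that h = ((b₀ + b₁·j)⁻¹/‖(b₀ + b₁·j)⁻¹‖)·(cos θ + (sin θ)·i)·((a₀ + a₁·j)/‖a₀ + a₁·j‖). In other words, the fibre of the parametrised Hopf map Φ over ([a₀:a₁], [b₀:b₁]) consists exactly of the unit quaternions of this form. -/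
open Quaternion

noncomputable section

/-- The complex components of a quaternion: `q = c₀ + c₁·j` with
`c₀ = re q + (im_i q)·i` and `c₁ = im_j q + (im_k q)·i`. -/
def comps (q : ℍ[ℝ]) : ℂ × ℂ := (⟨q.re, q.imI⟩, ⟨q.imJ, q.imK⟩)

/-- The complex projective line `ℂP¹`, as the projectivization of `ℂ²`. -/
abbrev CP1 := Projectivization ℂ (ℂ × ℂ)

/-- The quotient topology on `ℂP¹`. -/
instance : TopologicalSpace CP1 := instTopologicalSpaceQuotient

lemma cq_mul (z w : ℂ) : cq (z * w) = cq z * cq w := by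
  ext <;> simp only [Quaternion.re_mul, Quaternion.imI_mul, Quaternion.imJ_mul, Quaternion.imK_mul] <;> simp [cq, Quaternion.ext_iff]

lemma comps_cq_mul (l : ℂ) (q : ℍ[ℝ]) : comps (cq l * q) = l • comps q := by
  simp only [comps, Quaternion.re_mul, Quaternion.imI_mul, Quaternion.imJ_mul, Quaternion.imK_mul]
  simp [comps, cq, Prod.ext_iff, Complex.ext_iff, Complex.mul_re, Complex.mul_im]

lemma comps_inj {p q : ℍ[ℝ]} (h : comps p = comps q) : p = q := by
  simp [comps, Prod.ext_iff, Complex.ext_iff] at h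
  ext <;> tauto

lemma comps_A (a₀ a₁ : ℂ) : comps (cq a₀ + cq a₁ * jq) = (a₀, a₁) := by
  simp only [comps, Quaternion.re_add, Quaternion.imI_add, Quaternion.imJ_add, Quaternion.imK_add, Quaternion.re_mul, Quaternion.imI_mul, Quaternion.imJ_mul, Quaternion.imK_mul]
  simp [comps, cq, jq, Prod.ext_iff, Complex.ext_iff]

lemma cq_real_smul (r : ℝ) (q : ℍ[ℝ]) : cq (r : ℂ) * q = r • q := by
  ext <;> simp only [Quaternion.re_mul, Quaternion.imI_mul, Quaternion.imJ_mul, Quaternion.imK_mul] <;> simp [cq]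

lemma exp_theta (θ : ℝ) : Complex.exp (θ * Complex.I) = ⟨Real.cos θ, Real.sin θ⟩ := by
  rw [Complex.exp_mul_I, Complex.ext_iff]
  constructor <;> simp [Complex.cos_ofReal_re, Complex.sin_ofReal_re]

/-- Description of the fibre of the parametrised Hopf map: for a unit quaternion `h`, the
complex components of `(b₀ + b₁·j)·h` represent `[a₀:a₁] ∈ ℂP¹` if and only if
`h = ((b₀ + b₁·j)⁻¹/‖(b₀ + b₁·j)⁻¹‖)·(cos θ + (sin θ)·i)·((a₀ + a₁·j)/‖a₀ + a₁·j‖)`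
for some `θ ∈ ℝ`. -/
theorem parametrised_hopf_fibre (h : ℍ[ℝ]) (hh : ‖h‖ = 1) (a₀ a₁ b₀ b₁ : ℂ)
    (ha : ((a₀, a₁) : ℂ × ℂ) ≠ 0) (hb : ((b₀, b₁) : ℂ × ℂ) ≠ 0)
    (hc : comps ((cq b₀ + cq b₁ * jq) * h) ≠ 0) :
    Projectivization.mk ℂ _ hc = Projectivization.mk ℂ (a₀, a₁) ha ↔
      ∃ θ : ℝ,
        h = (‖(cq b₀ + cq b₁ * jq)⁻¹‖⁻¹ • (cq b₀ + cq b₁ * jq)⁻¹) *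
          cq ⟨Real.cos θ, Real.sin θ⟩ *
          (‖cq a₀ + cq a₁ * jq‖⁻¹ • (cq a₀ + cq a₁ * jq)) := by
  set B := cq b₀ + cq b₁ * jq with hBdef
  set A := cq a₀ + cq a₁ * jq with hAdef
  have hA : A ≠ 0 := fun h0 => ha (by rw [← comps_A a₀ a₁, ← hAdef, h0]; simp [comps, Prod.ext_iff, Complex.ext_iff])
  have hB : B ≠ 0 := fun h0 => hb (by rw [← comps_A b₀ b₁, ← hBdef, h0]; simp [comps, Prod.ext_iff, Complex.ext_iff])
  have hBi : (B⁻¹ : ℍ[ℝ]) ≠ 0 := inv_ne_zero hB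
  have hnB : ‖(B⁻¹ : ℍ[ℝ])‖ ≠ 0 := norm_ne_zero_iff.2 hBi
  have hnA : ‖A‖ ≠ 0 := norm_ne_zero_iff.2 hA
  rw [Projectivization.mk_eq_mk_iff]
  constructor
  · rintro ⟨u, hu⟩
    have hBh : B * h = cq (u : ℂ) * A := by
      apply comps_inj
      rw [comps_cq_mul, comps_A a₀ a₁, ← hu, Units.smul_def]
    have h1 : h = B⁻¹ * (cq (u : ℂ) * A) := by
      rw [← hBh, ← mul_assoc, inv_mul_cancel₀ hB, one_mul]
    have hn1 : (1 : ℝ) = ‖(B⁻¹ : ℍ[ℝ])‖ * (‖(u : ℂ)‖ * ‖A‖) := by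
      rw [← hh, h1, norm_mul, norm_mul, norm_cq]
    have habs : ‖(u : ℂ)‖ = ‖(B⁻¹ : ℍ[ℝ])‖⁻¹ * ‖A‖⁻¹ := by
      rw [mul_comm, ← mul_inv]
      refine eq_inv_of_mul_eq_one_left ?_
      linear_combination -hn1
    refine ⟨Complex.arg (u : ℂ), ?_⟩
    have hu2 : (u : ℂ) = (‖(u : ℂ)‖ : ℂ) *
        ⟨Real.cos (Complex.arg (u : ℂ)), Real.sin (Complex.arg (u : ℂ))⟩ := by
      rw [← exp_theta, Complex.norm_mul_exp_arg_mul_I]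
    rw [h1]
    conv_lhs => rw [hu2, cq_mul, cq_real_smul, habs]
    simp only [smul_mul_assoc, mul_smul_comm, smul_smul, mul_assoc]
    rw [mul_comm (‖A‖⁻¹)]
  · rintro ⟨θ, hθ⟩
    set e : ℂ := ⟨Real.cos θ, Real.sin θ⟩ with hedef
    have he : e ≠ 0 := by
      intro h0
      have hcos : Real.cos θ = 0 := by simpa using congrArg Complex.re h0
      have hsin : Real.sin θ = 0 := by simpa using congrArg Complex.im h0
      nlinarith [Real.sin_sq_add_cos_sq θ]
    set r : ℝ := ‖(B⁻¹ : ℍ[ℝ])‖⁻¹ * ‖A‖⁻¹ with hrdef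
    have hr : r ≠ 0 := mul_ne_zero (inv_ne_zero hnB) (inv_ne_zero hnA)
    have hBh : B * h = cq ((r : ℂ) * e) * A := by
      rw [hθ, cq_mul, cq_real_smul]
      simp only [smul_mul_assoc, mul_smul_comm, smul_smul, ← mul_assoc]
      rw [mul_inv_cancel₀ hB, one_mul, hrdef, mul_comm (‖A‖⁻¹)]
    have hne : (r : ℂ) * e ≠ 0 := mul_ne_zero (by exact_mod_cast hr) he
    refine ⟨Units.mk0 _ hne, ?_⟩
    rw [Units.smul_def, Units.val_mk0, ← comps_A a₀ a₁, ← hAdef, ← comps_cq_mul, ← hBh]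
end
end

section
/- Let i, j ∈ {0,1}, let h be a quaternion of norm 1, let (b₀, b₁) ∈ ℂ² with b_j ≠ 0, and let (c₀, c₁) be the complex components of (b₀ + b₁·j)·h, assumed to satisfy c_i ≠ 0. Then the quaternion σ_j(b₀, b₁)·h·σ_i(c₀, c₁)⁻¹ is a unit complex number, i.e. its j- and k-components vanish and it has norm 1. -/
open Quaternion

noncomputable section

/-- `σ_j` for `j ∈ {0,1}`. -/
def sigma' (j : Fin 2) (a₀ a₁ : ℂ) : ℍ[ℝ] := if j = 0 then sigma0 a₀ a₁ else sigma1 a₀ a₁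

@[simp] lemma cq_re (z : ℂ) : (cq z).re = z.re := rfl
@[simp] lemma cq_imI (z : ℂ) : (cq z).imI = z.im := rfl
@[simp] lemma cq_imJ (z : ℂ) : (cq z).imJ = 0 := rfl
@[simp] lemma cq_imK (z : ℂ) : (cq z).imK = 0 := rfl
@[simp] lemma jq_re : jq.re = 0 := rfl
@[simp] lemma jq_imI : jq.imI = 0 := rfl
@[simp] lemma jq_imJ : jq.imJ = 1 := rfl
@[simp] lemma jq_imK : jq.imK = 0 := rfl

lemma cq_one : cq 1 = 1 := by
  ext <;> simp [cq]

lemma star_cq (z : ℂ) : star (cq z) = cq (star z) := by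
  ext <;> simp

lemma decomp (q : ℍ[ℝ]) : cq (comps q).1 + cq (comps q).2 * jq = q := by
  ext <;> simp [comps]

lemma sigma'_norm (j : Fin 2) (a₀ a₁ : ℂ) : ‖sigma' j a₀ a₁‖ = 1 := by
  have h0 : (cq 1 + cq (a₁ / a₀) * jq) ≠ 0 := by
    intro hEq
    have := congrArg QuaternionAlgebra.re hEq
    simp at this
  have h1 : (cq (a₀ / a₁) + jq) ≠ 0 := by
    intro hEq
    have := congrArg QuaternionAlgebra.imJ hEq
    simp at this
  rcases Fin.exists_fin_two.mp ⟨j, rfl⟩ with rfl | rfl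
  · rw [sigma', if_pos rfl, sigma0, norm_smul, Real.norm_eq_abs, abs_inv, abs_norm,
      inv_mul_cancel₀ (norm_ne_zero_iff.mpr h0)]
  · rw [sigma', if_neg (by decide), sigma1, norm_smul, Real.norm_eq_abs, abs_inv, abs_norm,
      inv_mul_cancel₀ (norm_ne_zero_iff.mpr h1)]

lemma sigma'_eq (j : Fin 2) (a₀ a₁ : ℂ) (ha : (if j = 0 then a₀ else a₁) ≠ 0) :
    ∃ r : ℝ, sigma' j a₀ a₁ =
      r • (cq (if j = 0 then a₀ else a₁)⁻¹ * (cq a₀ + cq a₁ * jq)) := by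
  rcases Fin.exists_fin_two.mp ⟨j, rfl⟩ with rfl | rfl
  · simp only [reduceIte] at ha ⊢
    refine ⟨‖cq 1 + cq (a₁ / a₀) * jq‖⁻¹, ?_⟩
    rw [sigma', if_pos rfl, sigma0]
    congr 1
    rw [mul_add, ← mul_assoc, ← cq_mul, ← cq_mul, inv_mul_cancel₀ ha, inv_mul_eq_div]
  · have e : (if (1 : Fin 2) = 0 then a₀ else a₁) = a₁ := rfl
    rw [e] at ha
    rw [e]
    refine ⟨‖cq (a₀ / a₁) + jq‖⁻¹, ?_⟩
    rw [sigma', if_neg (by decide), sigma1]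
    congr 1
    rw [mul_add, ← mul_assoc, ← cq_mul, ← cq_mul, inv_mul_cancel₀ ha, inv_mul_eq_div,
      cq_one, one_mul]

lemma inv_of_unit (q : ℍ[ℝ]) (hq : ‖q‖ = 1) : q⁻¹ = star q := by
  have : normSq q = 1 := by
    rw [Quaternion.normSq_eq_norm_mul_self, hq, mul_one]
  rw [Quaternion.inv_def, this]
  simp

/-- The quaternion `σ_j(b₀,b₁)·h·σ_i(c₀,c₁)⁻¹`, where `(c₀,c₁)` are the complex components
of `(b₀ + b₁·j)·h`, is a unit complex number: its `j`- and `k`-components vanish and it has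
norm `1`. -/
theorem trivialising_map_takes_values_in_circle (i j : Fin 2) (h : ℍ[ℝ]) (hh : ‖h‖ = 1)
    (b₀ b₁ : ℂ) (hb : (if j = 0 then b₀ else b₁) ≠ 0)
    (hc : (if i = 0 then (comps ((cq b₀ + cq b₁ * jq) * h)).1
           else (comps ((cq b₀ + cq b₁ * jq) * h)).2) ≠ 0) :
    (sigma' j b₀ b₁ * h * (sigma' i (comps ((cq b₀ + cq b₁ * jq) * h)).1
        (comps ((cq b₀ + cq b₁ * jq) * h)).2)⁻¹).imJ = 0 ∧
    (sigma' j b₀ b₁ * h * (sigma' i (comps ((cq b₀ + cq b₁ * jq) * h)).1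
        (comps ((cq b₀ + cq b₁ * jq) * h)).2)⁻¹).imK = 0 ∧
    ‖sigma' j b₀ b₁ * h * (sigma' i (comps ((cq b₀ + cq b₁ * jq) * h)).1
        (comps ((cq b₀ + cq b₁ * jq) * h)).2)⁻¹‖ = 1 := by

  set C : ℍ[ℝ] := (cq b₀ + cq b₁ * jq) * h with hC
  set c₀ : ℂ := (comps C).1
  set c₁ : ℂ := (comps C).2
  obtain ⟨r, hr⟩ := sigma'_eq j b₀ b₁ hb
  obtain ⟨s, hs⟩ := sigma'_eq i c₀ c₁ hc
  have hinv : (sigma' i c₀ c₁)⁻¹ = star (sigma' i c₀ c₁) :=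
    inv_of_unit _ (sigma'_norm i c₀ c₁)
  set β : ℂ := (if j = 0 then b₀ else b₁)⁻¹
  set γ : ℂ := (if i = 0 then c₀ else c₁)⁻¹
  have key : sigma' j b₀ b₁ * h * (sigma' i c₀ c₁)⁻¹
      = (r * s * normSq C) • cq (β * star γ) := by
    rw [hinv, hr, hs, decomp]
    rw [Quaternion.star_smul, star_mul, star_cq]
    rw [smul_mul_assoc, smul_mul_assoc, mul_smul_comm, smul_smul]
    have : cq β * (cq b₀ + cq b₁ * jq) * h * (star C * cq (star γ))
        = cq β * (C * star C) * cq (star γ) := by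
      rw [mul_assoc (cq β), ← hC, ← mul_assoc, mul_assoc (cq β)]
    rw [this, Quaternion.self_mul_star, mul_assoc, Quaternion.coe_mul_eq_smul, mul_smul_comm,
      smul_smul, cq_mul, mul_assoc]
  refine ⟨?_, ?_, ?_⟩
  · rw [key]; simp
  · rw [key]; simp
  · rw [norm_mul, norm_mul, norm_inv, sigma'_norm, sigma'_norm, hh]
    norm_num
end
end
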